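/- Let K be an 'ABC' curvature tensor built from a curvature tensor R with Ricci form ric and scalar curvature S on an n-dimensional inner product space: K(X,Y,Z,W) = R(X,Y,Z,W) + A(g(X,W)ric(Y,Z) − g(Y,W)ric(X,Z)) + B(ric(X,W)g(Y,Z) − ric(Y,W)g(X,Z)) + C·S(g(X,W)g(Y,Z) − g(Y,W)g(X,Z)). If a symmetric bilinear form b is R-compatible, then b is K-compatible. -/
import Mathlib


open RealInnerProductSpace

/-!
`R` is a generalized curvature tensor (scalar quadrilinear form, last slot playing the
role of the lowered index) on an `n`-dimensional real inner product space with
orthonormal basis `(eₐ)`; `ric` is its Ricci contraction and `S` its scalar curvature.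
`K` is the `ABC` curvature tensor built from `R`.  A symmetric bilinear form `b` is
represented by the self-adjoint operator `Bop` (`b(X,Y) = ⟪Bop X, Y⟫`), so that
`b(R(Y,Z)W, X) = R(Y,Z,W, Bop X)`.
-/

/-- If a symmetric bilinear form `b` is `R`-compatible, then `b` is `K`-compatible for
any `ABC` curvature tensor `K` built from `R`. -/
theorem K_compatible_of_R_compatible_ABC
    {V : Type*} [NormedAddCommGroup V] [InnerProductSpace ℝ V] [FiniteDimensional ℝ V]
    (e : OrthonormalBasis (Fin (Module.finrank ℝ V)) ℝ V)
    (R : V →ₗ[ℝ] V →ₗ[ℝ] V →ₗ[ℝ] V →ₗ[ℝ] ℝ)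
    (hanti1 : ∀ X Y Z W : V, R X Y Z W = - R Y X Z W)
    (hanti2 : ∀ X Y Z W : V, R X Y Z W = - R X Y W Z)
    (hpair : ∀ X Y Z W : V, R X Y Z W = R Z W X Y)
    (hbianchi : ∀ X Y Z W : V, R X Y Z W + R Y Z X W + R Z X Y W = 0)
    (ric : V → V → ℝ)
    (hric : ∀ X Y : V, ric X Y = ∑ a, R (e a) X Y (e a))
    (S : ℝ) (hS : S = ∑ a, ric (e a) (e a))
    (A B C : ℝ)
    (K : V → V → V → V → ℝ)
    (hK : ∀ X Y Z W : V,
      K X Y Z W = R X Y Z W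
        + A * (⟪X, W⟫ * ric Y Z - ⟪Y, W⟫ * ric X Z)
        + B * (ric X W * ⟪Y, Z⟫ - ric Y W * ⟪X, Z⟫)
        + C * S * (⟪X, W⟫ * ⟪Y, Z⟫ - ⟪Y, W⟫ * ⟪X, Z⟫))
    (b : V →ₗ[ℝ] V →ₗ[ℝ] ℝ)
    (hbsymm : ∀ X Y : V, b X Y = b Y X)
    (Bop : V →ₗ[ℝ] V)
    (hBop : ∀ X Y : V, b X Y = ⟪Bop X, Y⟫)
    -- `b` is `R`-compatible: `b(R(Y,Z)W, X) + b(R(Z,X)W, Y) + b(R(X,Y)W, Z) = 0`: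
    (hRcompat : ∀ X Y Z W : V,
      R Y Z W (Bop X) + R Z X W (Bop Y) + R X Y W (Bop Z) = 0) :
    -- `b` is `K`-compatible:
    ∀ X Y Z W : V,
      K Y Z W (Bop X) + K Z X W (Bop Y) + K X Y W (Bop Z) = 0 := by

  -- `Bop` is self-adjoint
  have hs : ∀ U W : V, ⟪U, Bop W⟫ = ⟪W, Bop U⟫ := by
    intro U W
    calc ⟪U, Bop W⟫ = ⟪Bop W, U⟫ := real_inner_comm _ _
      _ = b W U := (hBop W U).symm
      _ = b U W := hbsymm W U
      _ = ⟪Bop U, W⟫ := hBop U W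
      _ = ⟪W, Bop U⟫ := real_inner_comm _ _
  -- the contraction of `R` against `Bop` over the last two slots vanishes
  have hzero : ∀ X Y : V, ∑ a, R X Y (e a) (Bop (e a)) = 0 := by
    intro X Y
    have hrep : ∀ w : V, Bop w = ∑ c, ⟪e c, Bop w⟫ • e c := by
      intro w; exact (e.sum_repr' (Bop w)).symm
    have hterm : ∀ a, R X Y (e a) (Bop (e a))
        = ∑ c, ⟪e c, Bop (e a)⟫ * R X Y (e a) (e c) := by
      intro a
      conv_lhs => rw [hrep (e a)]
      rw [map_sum]
      exact Finset.sum_congr rfl fun c _ => by rw [map_smul]; rfl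
    have hT : (∑ a, ∑ c, ⟪e c, Bop (e a)⟫ * R X Y (e a) (e c))
        = - ∑ a, ∑ c, ⟪e c, Bop (e a)⟫ * R X Y (e a) (e c) := by
      conv_lhs => rw [Finset.sum_comm]
      rw [← Finset.sum_neg_distrib]
      refine Finset.sum_congr rfl fun c _ => ?_
      rw [← Finset.sum_neg_distrib]
      refine Finset.sum_congr rfl fun a _ => ?_
      rw [hs (e c) (e a), hanti2 X Y (e a) (e c)]
      ring
    have : (∑ a, ∑ c, ⟪e c, Bop (e a)⟫ * R X Y (e a) (e c)) = 0 := by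
      linarith [hT]
    calc ∑ a, R X Y (e a) (Bop (e a))
        = ∑ a, ∑ c, ⟪e c, Bop (e a)⟫ * R X Y (e a) (e c) :=
          Finset.sum_congr rfl fun a _ => hterm a
      _ = 0 := this
  -- `ric` is symmetric
  have hricsymm : ∀ X Y : V, ric X Y = ric Y X := by
    intro X Y
    rw [hric, hric]
    refine Finset.sum_congr rfl fun a _ => ?_
    rw [hpair (e a) X Y (e a), hanti1 Y (e a) (e a) X, hanti2 (e a) Y (e a) X]
    ring
  -- `Bop` commutes with the Ricci operator
  have hr : ∀ X Y : V, ric Y (Bop X) = ric X (Bop Y) := by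
    intro X Y
    have h1 : ∑ a, (R (e a) Y (e a) (Bop X) + R Y X (e a) (Bop (e a))
        + R X (e a) (e a) (Bop Y)) = 0 :=
      Finset.sum_eq_zero fun a _ => hRcompat X (e a) Y (e a)
    rw [Finset.sum_add_distrib, Finset.sum_add_distrib, hzero Y X] at h1
    have h2 : ∑ a, R (e a) Y (e a) (Bop X) = - ric Y (Bop X) := by
      rw [hric]
      rw [← Finset.sum_neg_distrib]
      exact Finset.sum_congr rfl fun a _ => by
        rw [hanti2 (e a) Y (e a) (Bop X)]
    have h3 : ∑ a, R X (e a) (e a) (Bop Y) = ric X (Bop Y) := by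
      rw [hricsymm X (Bop Y), hric]
      exact Finset.sum_congr rfl fun a _ => by
        rw [hpair X (e a) (e a) (Bop Y)]
    rw [h2, h3] at h1
    linarith
  intro X Y Z W
  rw [hK, hK, hK]
  linear_combination hRcompat X Y Z W
    + (A * ric Z W + C * S * ⟪Z, W⟫) * hs Y X
    + (A * ric Y W + C * S * ⟪Y, W⟫) * hs X Z
    + (A * ric X W + C * S * ⟪X, W⟫) * hs Z Y
    + B * ⟪Z, W⟫ * hr X Y
    + B * ⟪Y, W⟫ * hr Z X
    + B * ⟪X, W⟫ * hr Y Z
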